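/- Let F be a field, V an infinite-dimensional F-vector space, V* its dual, V̄ = V ⊕ V*, and f the alternating bilinear form on V̄ given by f((a,α),(b,β)) = α(b) − β(a). Then every generator of the symplectic polar space S_f admits a complement: for every maximal totally f-isotropic subspace W of V̄ there exists a maximal totally f-isotropic subspace W' with W ∩ W' = 0 and W + W' = V̄. -/

import Mathlib

/-- The symplectic form `f((a,α),(b,β)) = α(b) − β(a)` on `V̄ = V ⊕ V*`. -/
def symForm {F V : Type*} [Field F] [AddCommGroup V] [Module F V]
    (p q : V × Module.Dual F V) : F :=
  p.2 q.1 - q.2 p.1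

/-- A subspace of `V̄` is totally `f`-isotropic. -/
def SymTotIso {F V : Type*} [Field F] [AddCommGroup V] [Module F V]
    (W : Submodule F (V × Module.Dual F V)) : Prop :=
  ∀ x ∈ W, ∀ y ∈ W, symForm x y = 0

/-- A generator of the symplectic polar space `S_f`: a maximal totally
`f`-isotropic subspace of `V̄`. -/
def SymGen {F V : Type*} [Field F] [AddCommGroup V] [Module F V]
    (W : Submodule F (V × Module.Dual F V)) : Prop :=
  SymTotIso W ∧
    ∀ W' : Submodule F (V × Module.Dual F V), SymTotIso W' → W ≤ W' → W' = W

/-- Every generator of the symplectic polar space `S_f` on `V̄ = V ⊕ V*`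
admits a complement. -/
theorem stmt_8 {F V : Type*} [Field F] [AddCommGroup V] [Module F V]
    (hV : ¬ Module.Finite F V)
    (W : Submodule F (V × Module.Dual F V)) (hW : SymGen W) :
    ∃ W' : Submodule F (V × Module.Dual F V),
      SymGen W' ∧ W ⊓ W' = ⊥ ∧ W ⊔ W' = ⊤ := by
  classical
  obtain ⟨hWiso, hWmax⟩ := hW
  -- A = projection of W to the first factor
  set A : Submodule F V := W.map (LinearMap.fst F V (Module.Dual F V)) with hA
  have memA : ∀ x ∈ W, (x : V × Module.Dual F V).1 ∈ A := fun x hx => ⟨x, hx, rfl⟩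
  obtain ⟨B, hAB⟩ := Submodule.exists_isCompl A
  refine ⟨B.prod B.dualAnnihilator, ⟨?_, ?_⟩, ?_, ?_⟩
  · -- W' is totally isotropic
    rintro x hx y hy
    rw [Submodule.mem_prod] at hx hy
    have h1 := (Submodule.mem_dualAnnihilator _).mp hx.2 y.1 hy.1
    have h2 := (Submodule.mem_dualAnnihilator _).mp hy.2 x.1 hx.1
    simp [symForm, h1, h2]
  · -- W' is maximal
    intro W'' hiso hle
    refine le_antisymm ?_ hle
    rintro ⟨x, ξ⟩ hx
    have hxB : x ∈ B := by
      rw [← Subspace.forall_mem_dualAnnihilator_apply_eq_zero_iff]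
      intro β hβ
      have h0 : ((0 : V), β) ∈ W'' :=
        hle (Submodule.mem_prod.mpr ⟨Submodule.zero_mem B, hβ⟩)
      have := hiso _ hx _ h0
      simpa [symForm] using this
    have hx0 : ((x : V), (0 : Module.Dual F V)) ∈ W'' :=
      hle (Submodule.mem_prod.mpr ⟨hxB, Submodule.zero_mem _⟩)
    have hξ : ((0 : V), ξ) ∈ W'' := by
      have := W''.sub_mem hx hx0
      simpa using this
    have hξB : ξ ∈ B.dualAnnihilator := by
      rw [Submodule.mem_dualAnnihilator]
      intro b hb
      have hb0 : ((b : V), (0 : Module.Dual F V)) ∈ W'' :=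
        hle (Submodule.mem_prod.mpr ⟨hb, Submodule.zero_mem _⟩)
      have := hiso _ hξ _ hb0
      simpa [symForm] using this
    exact Submodule.mem_prod.mpr ⟨hxB, hξB⟩
  · -- W ⊓ W' = ⊥
    rw [eq_bot_iff]
    rintro ⟨x, ξ⟩ hx
    obtain ⟨hxW, hxW'⟩ := Submodule.mem_inf.mp hx
    rw [Submodule.mem_prod] at hxW'
    have hxA : x ∈ A := memA _ hxW
    have hx0 : x = 0 := by
      have := hAB.disjoint.le_bot (Submodule.mem_inf.mpr ⟨hxA, hxW'.1⟩)
      simpa using this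
    subst hx0
    have hξA : ∀ a ∈ A, ξ a = 0 := by
      rintro a ⟨⟨a', α⟩, haW, rfl⟩
      have := hWiso _ hxW _ haW
      simpa [symForm] using this
    have hξ0 : ξ = 0 := by
      ext v
      have hv : v ∈ A ⊔ B := by rw [hAB.sup_eq_top]; trivial
      obtain ⟨a, ha, b, hb, rfl⟩ := Submodule.mem_sup.mp hv
      have hb0 := (Submodule.mem_dualAnnihilator _).mp hxW'.2 b hb
      simp [hξA a ha, hb0]
    exact (Submodule.mem_bot F).mpr (by rw [hξ0]; rfl)
  · -- W ⊔ W' = ⊤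
    rw [eq_top_iff]
    rintro ⟨v, φ⟩ -
    have hv : v ∈ A ⊔ B := by rw [hAB.sup_eq_top]; trivial
    obtain ⟨a, ha, b, hb, rfl⟩ := Submodule.mem_sup.mp hv
    obtain ⟨⟨a', α₀⟩, ha'W, ha'⟩ := ha
    obtain rfl : a' = a := ha'
    -- γ : 0 on A, φ - α₀ on B
    set π : V →ₗ[F] B := Submodule.projectionOnto B A hAB.symm with hπ
    set γ : Module.Dual F V := (φ - α₀).comp (B.subtype.comp π) with hγ
    have hγA : ∀ a'' ∈ A, γ a'' = 0 := by
      intro a'' ha''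
      have : π a'' = 0 := Submodule.projectionOnto_apply_right hAB.symm ⟨a'', ha''⟩
      simp [hγ, this]
    have hγB : ∀ b' ∈ B, γ b' = (φ - α₀) b' := by
      intro b' hb'
      have : π b' = ⟨b', hb'⟩ := Submodule.projectionOnto_apply_left hAB.symm ⟨b', hb'⟩
      simp [hγ, this]
    -- (0, γ) ∈ W by maximality
    have hγW : ((0 : V), γ) ∈ W := by
      have hiso2 : SymTotIso (W ⊔ Submodule.span F {((0 : V), γ)}) := by
        rintro x hx y hy
        obtain ⟨w₁, hw₁, s₁, hs₁, rfl⟩ := Submodule.mem_sup.mp hx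
        obtain ⟨w₂, hw₂, s₂, hs₂, rfl⟩ := Submodule.mem_sup.mp hy
        obtain ⟨c, rfl⟩ := Submodule.mem_span_singleton.mp hs₁
        obtain ⟨d, rfl⟩ := Submodule.mem_span_singleton.mp hs₂
        have h12 := hWiso _ hw₁ _ hw₂
        have hg1 : γ w₁.1 = 0 := hγA _ (memA _ hw₁)
        have hg2 : γ w₂.1 = 0 := hγA _ (memA _ hw₂)
        simp only [symForm, Prod.smul_mk, smul_zero, Prod.fst_add, Prod.snd_add,
          Prod.smul_snd, Prod.smul_fst, add_zero, LinearMap.add_apply,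
          LinearMap.smul_apply, smul_eq_mul] at h12 ⊢
        rw [hg1, hg2]
        linear_combination h12
      have heq := hWmax _ hiso2 le_sup_left
      rw [← heq]
      exact Submodule.mem_sup_right (Submodule.mem_span_singleton_self _)
    -- decomposition
    have hmem1 : ((a' : V), α₀ + γ) ∈ W := by
      have := W.add_mem ha'W hγW
      simpa using this
    have hmem2 : ((b : V), φ - α₀ - γ) ∈ B.prod B.dualAnnihilator := by
      refine Submodule.mem_prod.mpr ⟨hb, (Submodule.mem_dualAnnihilator _).mpr ?_⟩
      intro b' hb'
      have := hγB b' hb'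
      simp only [LinearMap.sub_apply] at this ⊢
      rw [this]
      ring_nf
    have hsum : ((a' : V), α₀ + γ) + ((b : V), φ - α₀ - γ) = (a' + b, φ) := by
      apply Prod.ext
      · rfl
      · show α₀ + γ + (φ - α₀ - γ) = φ
        abel
    exact Submodule.mem_sup.mpr ⟨_, hmem1, _, hmem2, hsum⟩
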